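/- For the gradient-descent step y' := y − α∇_y g(x₂, y), any point z ∈ F, and any λ > 0: ‖y' − y*(x₂)‖² ≤ (1+λ)(1−αμ_g)‖y − z‖² + 2(1 + 1/λ)(1−αμ_g)‖z − y*(x₁)‖² + (2L₁²/μ_g²)(1 + 1/λ)(1−αμ_g)‖x₁ − x₂‖². -/

import Mathlib

open RealInnerProductSpace

/-- Partial gradient in the first variable of a real-valued function on `E × F`. -/
noncomputable def gradX {E F : Type*}
    [NormedAddCommGroup E] [InnerProductSpace ℝ E] [CompleteSpace E]
    [NormedAddCommGroup F] [InnerProductSpace ℝ F] [CompleteSpace F]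
    (f : E → F → ℝ) (x : E) (y : F) : E :=
  gradient (fun u => f u y) x

/-- Partial gradient in the second variable of a real-valued function on `E × F`. -/
noncomputable def gradY {E F : Type*}
    [NormedAddCommGroup E] [InnerProductSpace ℝ E] [CompleteSpace E]
    [NormedAddCommGroup F] [InnerProductSpace ℝ F] [CompleteSpace F]
    (f : E → F → ℝ) (x : E) (y : F) : F :=
  gradient (fun v => f x v) y

open RealInnerProductSpace

section aux
variable {F : Type*} [NormedAddCommGroup F] [InnerProductSpace ℝ F] [CompleteSpace F]

lemma aux_hasDerivAt_line (f : F → ℝ) (hf : Differentiable ℝ f) (y v : F) (t : ℝ) :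
    HasDerivAt (fun s : ℝ => f (y + s • v)) ⟪gradient f (y + t • v), v⟫ t := by
  have hline : HasDerivAt (fun s : ℝ => y + s • v) v t := by
    simpa using ((hasDerivAt_id t).smul_const v).const_add y
  have hgrad := (hf (y + t • v)).hasGradientAt
  have hfd : HasFDerivAt f (InnerProductSpace.toDual ℝ F (gradient f (y + t • v))) (y + t • v) :=
    hgrad.hasFDerivAt
  have := hfd.comp_hasDerivAt t hline
  rw [InnerProductSpace.toDual_apply_apply] at this
  exact this

lemma aux_descent (f : F → ℝ) (hf : Differentiable ℝ f) (L : ℝ)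
    (hlip : ∀ a b : F, ‖gradient f a - gradient f b‖ ≤ L * ‖a - b‖) (y v : F) :
    f (y + v) ≤ f y + ⟪gradient f y, v⟫ + L / 2 * ‖v‖ ^ 2 := by
  set ψ : ℝ → ℝ := fun t => f (y + t • v) - ⟪gradient f y, v⟫ * t - L / 2 * ‖v‖ ^ 2 * t ^ 2 with hψ
  have hψd : ∀ t : ℝ, HasDerivAt ψ
      (⟪gradient f (y + t • v), v⟫ - ⟪gradient f y, v⟫ - L * ‖v‖ ^ 2 * t) t := by
    intro t
    have h1 := aux_hasDerivAt_line f hf y v t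
    have h2 : HasDerivAt (fun t : ℝ => ⟪gradient f y, v⟫ * t) ⟪gradient f y, v⟫ t := by
      simpa using (hasDerivAt_id t).const_mul ⟪gradient f y, v⟫
    have h3 : HasDerivAt (fun t : ℝ => L / 2 * ‖v‖ ^ 2 * t ^ 2) (L * ‖v‖ ^ 2 * t) t := by
      have := ((hasDerivAt_pow 2 t).const_mul (L / 2 * ‖v‖ ^ 2))
      refine this.congr_deriv ?_
      norm_num
      ring
    exact (h1.sub h2).sub h3
  have hmono : AntitoneOn ψ (Set.Icc (0:ℝ) 1) := by
    apply antitoneOn_of_deriv_nonpos (convex_Icc 0 1)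
    · exact fun t _ => ((hψd t).continuousAt).continuousWithinAt
    · exact fun t _ => ((hψd t).differentiableAt).differentiableWithinAt
    · intro t ht
      rw [interior_Icc] at ht
      rw [(hψd t).deriv]
      have hdiff : ⟪gradient f (y + t • v) - gradient f y, v⟫
          ≤ L * ‖v‖ ^ 2 * t := by
        calc ⟪gradient f (y + t • v) - gradient f y, v⟫
            ≤ ‖gradient f (y + t • v) - gradient f y‖ * ‖v‖ := real_inner_le_norm _ _
          _ ≤ (L * ‖y + t • v - y‖) * ‖v‖ := by
              gcongr; exact hlip _ _
          _ = L * ‖v‖ ^ 2 * t := by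
              have : ‖y + t • v - y‖ = t * ‖v‖ := by
                simp [norm_smul, abs_of_pos ht.1]
              rw [this]; ring
      have := inner_sub_left (𝕜 := ℝ) (gradient f (y + t • v)) (gradient f y) v
      linarith [hdiff, this.symm.le, this.le]
  have h01 := hmono (Set.mem_Icc.mpr ⟨le_refl 0, zero_le_one⟩)
      (Set.mem_Icc.mpr ⟨zero_le_one, le_refl 1⟩) zero_le_one
  simp only [hψ, zero_smul, add_zero, one_smul, mul_one, mul_zero, one_pow, zero_pow,
    sub_zero] at h01
  linarith [h01]

lemma aux_sq_le (a b : ℝ) (ha : 0 ≤ a) (hb : 0 ≤ b) (h : a ^ 2 ≤ b ^ 2) : a ≤ b := by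
  nlinarith

lemma aux_young (a b : F) (c : ℝ) (hc : 0 < c) :
    ‖a + b‖ ^ 2 ≤ (1 + c) * ‖a‖ ^ 2 + (1 + 1 / c) * ‖b‖ ^ 2 := by
  have h1 : ‖a + b‖ ^ 2 = ‖a‖ ^ 2 + 2 * ⟪a, b⟫ + ‖b‖ ^ 2 := norm_add_sq_real a b
  have h2 : ⟪a, b⟫ ≤ ‖a‖ * ‖b‖ := real_inner_le_norm a b
  have key : 2 * (‖a‖ * ‖b‖) ≤ c * ‖a‖ ^ 2 + 1 / c * ‖b‖ ^ 2 := by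
    rw [← sub_nonneg]
    have heq : c * ‖a‖ ^ 2 + 1 / c * ‖b‖ ^ 2 - 2 * (‖a‖ * ‖b‖)
        = (c * ‖a‖ - ‖b‖) ^ 2 / c := by
      field_simp; ring
    rw [heq]; positivity
  linarith
end aux


set_option maxHeartbeats 1000000 in
theorem inner_step_error_decomposition
    {E : Type*} [NormedAddCommGroup E] [InnerProductSpace ℝ E] [FiniteDimensional ℝ E]
    {F : Type*} [NormedAddCommGroup F] [InnerProductSpace ℝ F] [FiniteDimensional ℝ F]
    (L₁ μg α lam : ℝ) (hμg : 0 < μg) (hμL : μg ≤ L₁)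
    (hα0 : 0 < α) (hα : α ≤ 1 / L₁) (hlam : 0 < lam)
    (g : E → F → ℝ)
    (hdiff : Differentiable ℝ (fun p : E × F => g p.1 p.2))
    (hLip : ∀ x x' : E, ∀ y y' : F,
      ‖gradX g x y - gradX g x' y'‖ ^ 2 + ‖gradY g x y - gradY g x' y'‖ ^ 2
        ≤ L₁ ^ 2 * (‖x - x'‖ ^ 2 + ‖y - y'‖ ^ 2))
    (ystar : E → F)
    (hsc : ∀ x : E, ∀ y y' : F,
      g x y + ⟪gradY g x y, y' - y⟫ + μg / 2 * ‖y' - y‖ ^ 2 ≤ g x y')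
    (hmin : ∀ x : E, ∀ y : F, g x (ystar x) ≤ g x y)
    (x₁ x₂ : E) (y z : F) :
    ‖(y - α • gradY g x₂ y) - ystar x₂‖ ^ 2
      ≤ (1 + lam) * (1 - α * μg) * ‖y - z‖ ^ 2
        + 2 * (1 + 1 / lam) * (1 - α * μg) * ‖z - ystar x₁‖ ^ 2
        + 2 * L₁ ^ 2 / μg ^ 2 * (1 + 1 / lam) * (1 - α * μg) * ‖x₁ - x₂‖ ^ 2 := by
  have hL₁ : 0 < L₁ := lt_of_lt_of_le hμg hμL
  have hαL : α * L₁ ≤ 1 := by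
    rw [div_eq_mul_inv, one_mul] at hα
    calc α * L₁ ≤ L₁⁻¹ * L₁ := by gcongr
      _ = 1 := inv_mul_cancel₀ hL₁.ne'
  -- differentiability of partial functions
  have hdiffx : ∀ x : E, Differentiable ℝ (fun v => g x v) := by
    intro x
    have : (fun v => g x v) = (fun p : E × F => g p.1 p.2) ∘ (fun v : F => (x, v)) := rfl
    rw [this]
    exact hdiff.comp ((differentiable_const x).prodMk differentiable_id)
  -- Lipschitz in y for fixed x
  have hlipY : ∀ x : E, ∀ a b : F,
      ‖gradient (fun v => g x v) a - gradient (fun v => g x v) b‖ ≤ L₁ * ‖a - b‖ := by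
    intro x a b
    have h := hLip x x a b
    simp only [sub_self, norm_zero] at h
    have h2 : ‖gradY g x a - gradY g x b‖ ^ 2 ≤ (L₁ * ‖a - b‖) ^ 2 := by
      nlinarith [sq_nonneg ‖gradX g x a - gradX g x b‖]
    exact aux_sq_le _ _ (norm_nonneg _) (by positivity) h2
  -- gradient of minimizer is zero
  have hgrad0 : ∀ x : E, gradY g x (ystar x) = 0 := by
    intro x
    have hlm : IsLocalMin (fun v => g x v) (ystar x) :=
      Filter.Eventually.of_forall (fun v => hmin x v)
    have := hlm.fderiv_eq_zero
    simp only [gradY, gradient, this, map_zero]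
  -- Lipschitzness of ystar (squared)
  have hW : ‖ystar x₁ - ystar x₂‖ ^ 2 ≤ L₁ ^ 2 / μg ^ 2 * ‖x₁ - x₂‖ ^ 2 := by
    set Δ := ystar x₁ - ystar x₂ with hΔ
    clear_value Δ
    have h1 := hsc x₂ (ystar x₂) (ystar x₁)
    have h2 := hsc x₂ (ystar x₁) (ystar x₂)
    rw [hgrad0 x₂] at h1
    simp only [inner_zero_left] at h1
    have hn2 : ‖ystar x₂ - ystar x₁‖ = ‖Δ‖ := by rw [hΔ]; exact norm_sub_rev _ _
    rw [hn2] at h2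
    rw [← hΔ] at h1
    -- μg ‖Δ‖² ≤ ⟪gradY g x₂ (ystar x₁), Δ⟫
    have hinner : μg * ‖Δ‖ ^ 2 ≤ ⟪gradY g x₂ (ystar x₁), Δ⟫ := by
      have : ⟪gradY g x₂ (ystar x₁), ystar x₂ - ystar x₁⟫
          = - ⟪gradY g x₂ (ystar x₁), Δ⟫ := by
        rw [hΔ, ← inner_neg_right]; congr 1; abel
      rw [this] at h2
      linarith
    have hbound : ⟪gradY g x₂ (ystar x₁), Δ⟫ ≤ L₁ * ‖x₁ - x₂‖ * ‖Δ‖ := by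
      have he : gradY g x₂ (ystar x₁) = gradY g x₂ (ystar x₁) - gradY g x₁ (ystar x₁) := by
        rw [hgrad0 x₁, sub_zero]
      rw [he]
      calc ⟪gradY g x₂ (ystar x₁) - gradY g x₁ (ystar x₁), Δ⟫
          ≤ ‖gradY g x₂ (ystar x₁) - gradY g x₁ (ystar x₁)‖ * ‖Δ‖ := real_inner_le_norm _ _
        _ ≤ (L₁ * ‖x₁ - x₂‖) * ‖Δ‖ := by
            gcongr
            have h := hLip x₂ x₁ (ystar x₁) (ystar x₁)
            simp only [sub_self, norm_zero] at h
            have h2 : ‖gradY g x₂ (ystar x₁) - gradY g x₁ (ystar x₁)‖ ^ 2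
                ≤ (L₁ * ‖x₁ - x₂‖) ^ 2 := by
              rw [norm_sub_rev x₁ x₂]
              nlinarith [sq_nonneg ‖gradX g x₂ (ystar x₁) - gradX g x₁ (ystar x₁)‖]
            exact aux_sq_le _ _ (norm_nonneg _) (by positivity) h2
        _ = L₁ * ‖x₁ - x₂‖ * ‖Δ‖ := by ring
    have hmd : μg * ‖Δ‖ ≤ L₁ * ‖x₁ - x₂‖ := by
      rcases eq_or_lt_of_le (norm_nonneg Δ) with h | h
      · rw [← h, mul_zero]; positivity
      · nlinarith
    have hsq : (μg * ‖Δ‖) ^ 2 ≤ (L₁ * ‖x₁ - x₂‖) ^ 2 := by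
      have h0 : 0 ≤ μg * ‖Δ‖ := by positivity
      nlinarith
    rw [div_mul_eq_mul_div, le_div_iff₀ (by positivity)]
    nlinarith [hsq]
  -- contraction
  set G := gradY g x₂ y with hG
  have hGgrad : G = gradient (fun v => g x₂ v) y := hG
  clear_value G
  have hcontr : ‖(y - α • G) - ystar x₂‖ ^ 2 ≤ (1 - α * μg) * ‖y - ystar x₂‖ ^ 2 := by
    have hdesc := aux_descent (fun v => g x₂ v) (hdiffx x₂) L₁ (hlipY x₂) y (-(α • G))
    rw [← hGgrad] at hdesc
    have he1 : y + -(α • G) = y - α • G := by abel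
    have he2 : ⟪G, -(α • G)⟫ = -(α * ‖G‖ ^ 2) := by
      rw [inner_neg_right, real_inner_smul_right, real_inner_self_eq_norm_sq]
    have he3 : ‖-(α • G)‖ ^ 2 = α ^ 2 * ‖G‖ ^ 2 := by
      rw [norm_neg, norm_smul, Real.norm_eq_abs, abs_of_pos hα0, mul_pow]
    rw [he1, he2, he3] at hdesc
    have hm := hmin x₂ (y - α • G)
    have hs := hsc x₂ y (ystar x₂)
    rw [← hG] at hs
    have he4 : ⟪G, ystar x₂ - y⟫ = - ⟪y - ystar x₂, G⟫ := by
      rw [real_inner_comm, ← inner_neg_left]; congr 1; abel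
    have he5 : ‖ystar x₂ - y‖ = ‖y - ystar x₂‖ := norm_sub_rev _ _
    rw [he4, he5] at hs
    have hexp : ‖(y - α • G) - ystar x₂‖ ^ 2
        = ‖y - ystar x₂‖ ^ 2 - 2 * (α * ⟪y - ystar x₂, G⟫) + α ^ 2 * ‖G‖ ^ 2 := by
      have : (y - α • G) - ystar x₂ = (y - ystar x₂) - α • G := by abel
      rw [this, norm_sub_sq_real, real_inner_smul_right, norm_smul, Real.norm_eq_abs,
        abs_of_pos hα0, mul_pow]
    rw [hexp]
    have hP : α / 2 * ‖G‖ ^ 2 + μg / 2 * ‖y - ystar x₂‖ ^ 2 ≤ ⟪y - ystar x₂, G⟫ := by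
      nlinarith [mul_nonneg (mul_nonneg (sub_nonneg.2 hαL) hα0.le) (sq_nonneg ‖G‖)]
    have h2α := mul_le_mul_of_nonneg_left hP (by positivity : (0:ℝ) ≤ 2 * α)
    linarith [h2α]
  -- Young steps
  have hαμ : 0 ≤ 1 - α * μg := by
    have : α * μg ≤ α * L₁ := by gcongr
    linarith
  have hD : ‖y - ystar x₂‖ ^ 2 ≤ (1 + lam) * ‖y - z‖ ^ 2
      + (1 + 1 / lam) * ‖z - ystar x₂‖ ^ 2 := by
    have := aux_young (y - z) (z - ystar x₂) lam hlam
    have he : (y - z) + (z - ystar x₂) = y - ystar x₂ := by abel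
    rwa [he] at this
  have hZ : ‖z - ystar x₂‖ ^ 2 ≤ 2 * ‖z - ystar x₁‖ ^ 2 + 2 * ‖ystar x₁ - ystar x₂‖ ^ 2 := by
    have := aux_young (z - ystar x₁) (ystar x₁ - ystar x₂) 1 one_pos
    have he : (z - ystar x₁) + (ystar x₁ - ystar x₂) = z - ystar x₂ := by abel
    rw [he] at this
    norm_num at this
    linarith
  -- combine
  have hlam1 : 0 ≤ 1 + 1 / lam := by positivity
  have c1 : (1 - α * μg) * ‖y - ystar x₂‖ ^ 2
      ≤ (1 - α * μg) * ((1 + lam) * ‖y - z‖ ^ 2 + (1 + 1 / lam) * ‖z - ystar x₂‖ ^ 2) :=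
    mul_le_mul_of_nonneg_left hD hαμ
  have c2 : (1 - α * μg) * (1 + 1 / lam) * ‖z - ystar x₂‖ ^ 2
      ≤ (1 - α * μg) * (1 + 1 / lam)
        * (2 * ‖z - ystar x₁‖ ^ 2 + 2 * ‖ystar x₁ - ystar x₂‖ ^ 2) :=
    mul_le_mul_of_nonneg_left hZ (mul_nonneg hαμ hlam1)
  have c3 : 2 * (1 - α * μg) * (1 + 1 / lam) * ‖ystar x₁ - ystar x₂‖ ^ 2
      ≤ 2 * (1 - α * μg) * (1 + 1 / lam) * (L₁ ^ 2 / μg ^ 2 * ‖x₁ - x₂‖ ^ 2) :=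
    mul_le_mul_of_nonneg_left hW (by positivity)
  ring_nf at c1 c2 c3 ⊢
  linarith [hcontr, c1, c2, c3]
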